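/- Let ℓ ≥ 3, ℓ ≠ 4, m > n > 1 be integers, a = 2(ℓ−2), b = ℓ−4. If positive integers r, s, t satisfy P(ℓ, r) = m P(ℓ, s) = n P(ℓ, t), then setting u = ar − b, v = as − b, w = at − b, X = m²n v², Y = m²n² u v w, the point (X, Y) lies on the cubic curve Y² = X(X − A)(X − B) where A = mn(m−1)b² and B = mn(m−n)b². -/
import Mathlib


/-- The k-th ℓ-gonal number. -/
def polygonal (ℓ k : ℤ) : ℤ := ((ℓ - 2) * k ^ 2 - (ℓ - 4) * k) / 2

lemma two_polygonal (ℓ k : ℤ) : 2 * polygonal ℓ k = (ℓ - 2) * k ^ 2 - (ℓ - 4) * k := by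
  unfold polygonal
  refine Int.mul_ediv_cancel' ?_
  have h : Even (k * (k - 1)) := by
    have := Int.even_mul_succ_self (k - 1)
    simpa [mul_comm, sub_add_cancel] using this
  obtain ⟨c, hc⟩ := h
  exact ⟨(ℓ - 4) * c + k ^ 2, by linear_combination (ℓ - 4) * hc⟩

/-- If P(ℓ, r) = m P(ℓ, s) = n P(ℓ, t), then (X, Y) as below lies on the
elliptic curve Y² = X(X − A)(X − B). -/
theorem stmt_16 (ℓ m n r s t : ℤ) (hl : 3 ≤ ℓ) (hl4 : ℓ ≠ 4)
    (hmn : n < m) (hn : 1 < n) (hr : 0 < r) (hs : 0 < s) (ht : 0 < t)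
    (h1 : polygonal ℓ r = m * polygonal ℓ s)
    (h2 : polygonal ℓ r = n * polygonal ℓ t)
    (a b u v w X Y A B : ℤ)
    (ha : a = 2 * (ℓ - 2)) (hb : b = ℓ - 4)
    (hu : u = a * r - b) (hv : v = a * s - b) (hw : w = a * t - b)
    (hX : X = m ^ 2 * n * v ^ 2) (hY : Y = m ^ 2 * n ^ 2 * u * v * w)
    (hA : A = m * n * (m - 1) * b ^ 2) (hB : B = m * n * (m - n) * b ^ 2) :
    Y ^ 2 = X * (X - A) * (X - B) := by
  have sq : ∀ k : ℤ, (a * k - b) ^ 2 = 4 * (ℓ - 2) * (2 * polygonal ℓ k) + b ^ 2 := by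
    intro k
    rw [two_polygonal]
    subst ha hb
    ring
  have e1 : u ^ 2 - b ^ 2 = m * (v ^ 2 - b ^ 2) := by
    rw [hu, hv, sq r, sq s]
    linear_combination 8 * (ℓ - 2) * h1
  have e2 : u ^ 2 - b ^ 2 = n * (w ^ 2 - b ^ 2) := by
    rw [hu, hw, sq r, sq t]
    linear_combination 8 * (ℓ - 2) * h2
  subst hX hY hA hB
  linear_combination m ^ 4 * n ^ 3 * v ^ 2 *
    ((m * v ^ 2 - (m - n) * b ^ 2 + u ^ 2) * e1 - u ^ 2 * e2)
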